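/- For all β ≠ 0, with u = z(β) = coth β − 1/β, the quantity 1 − 2u/β − u² is strictly positive; equivalently, the 2×2 matrix ⟨m ⊗ m e^{α+βv}⟩ with m(v) = (1, v)ᵀ is invertible (positive definite). -/

import Mathlib

open Matrix

noncomputable def z (β : ℝ) : ℝ := Real.cosh β / Real.sinh β - 1/β

lemma sinh_sq_gt (β : ℝ) (hβ : β ≠ 0) : β^2 < Real.sinh β ^ 2 := by
  rcases hβ.lt_or_gt with h | h
  · have := Real.self_lt_sinh_iff.mpr (by linarith : (0:ℝ) < -β)
    rw [Real.sinh_neg] at this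
    nlinarith
  · have := Real.self_lt_sinh_iff.mpr h
    nlinarith

lemma key (β : ℝ) (hβ : β ≠ 0) : 0 < 1 - 2 * z β / β - (z β)^2 := by
  have hs : Real.sinh β ≠ 0 := Real.sinh_ne_zero.mpr hβ
  have hc : Real.cosh β ^ 2 = 1 + Real.sinh β ^ 2 := Real.cosh_sq' β
  have hid : 1 - 2 * z β / β - (z β)^2
      = (Real.sinh β ^ 2 - β^2) / (β^2 * Real.sinh β ^ 2) := by
    unfold z
    field_simp
    linear_combination (-(β ^ 2)) * hc
  rw [hid]
  apply div_pos
  · linarith [sinh_sq_gt β hβ]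
  · positivity

theorem m1_hessian_posDef (α β : ℝ) (hβ : β ≠ 0) :
    0 < 1 - 2 * z β / β - (z β)^2 ∧
    (!![Real.exp α * Real.sinh β / β, (Real.exp α * Real.sinh β / β) * z β;
        (Real.exp α * Real.sinh β / β) * z β,
        (Real.exp α * Real.sinh β / β) * (1 - 2 * z β / β)]).PosDef ∧
    IsUnit (!![Real.exp α * Real.sinh β / β, (Real.exp α * Real.sinh β / β) * z β;
        (Real.exp α * Real.sinh β / β) * z β,
        (Real.exp α * Real.sinh β / β) * (1 - 2 * z β / β)]).det := by
  have hk := key β hβ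
  have hρ : 0 < Real.exp α * Real.sinh β / β := by
    rcases hβ.lt_or_gt with h | h
    · have hs : Real.sinh β < 0 := Real.sinh_neg_iff.mpr h  -- check name
      have := Real.exp_pos α
      exact div_pos_of_neg_of_neg (by nlinarith) h
    · have hs : 0 < Real.sinh β := Real.sinh_pos_iff.mpr h
      have := Real.exp_pos α
      positivity
  have hPD : (!![Real.exp α * Real.sinh β / β, (Real.exp α * Real.sinh β / β) * z β;
        (Real.exp α * Real.sinh β / β) * z β,
        (Real.exp α * Real.sinh β / β) * (1 - 2 * z β / β)]).PosDef := by
    rw [Matrix.posDef_iff_dotProduct_mulVec]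
    constructor
    · ext i j
      fin_cases i <;> fin_cases j <;>
        simp [Matrix.conjTranspose_apply]
    · intro x hx
      have h01 : x 0 ≠ 0 ∨ x 1 ≠ 0 := by
        by_contra h
        push_neg at h
        exact hx (funext fun i => by fin_cases i <;> simp [h.1, h.2])
      set ρ := Real.exp α * Real.sinh β / β with hρdef
      set u := z β with hu
      simp only [Matrix.mulVec, dotProduct, Fin.sum_univ_two, Matrix.of_apply,
        Matrix.cons_val', Matrix.cons_val_zero, Matrix.cons_val_one,
        Matrix.head_cons, Matrix.head_fin_const, Matrix.empty_val',
        Matrix.cons_val_fin_one, RCLike.star_def, starRingEnd_apply, star_trivial]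
      rcases h01 with h0 | h1
      · rcases eq_or_ne (x 1) 0 with h1 | h1
        · simp only [h1]
          nlinarith [mul_pos hρ (pow_two_pos_of_ne_zero h0)]
        · nlinarith [mul_pos hρ (mul_pos hk (pow_two_pos_of_ne_zero h1)),
            mul_nonneg hρ.le (sq_nonneg (x 0 + u * x 1))]
      · nlinarith [mul_pos hρ (mul_pos hk (pow_two_pos_of_ne_zero h1)),
          mul_nonneg hρ.le (sq_nonneg (x 0 + u * x 1))]
  exact ⟨hk, hPD, isUnit_iff_ne_zero.mpr hPD.det_pos.ne'⟩
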